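/- Let $T > 0$, $C \ge 0$, and let $u : [0,T) \to \mathbb{R}$ be differentiable with $u(t) \ge 0$ and $u'(t) \le -\frac{u(t)}{T-t} + C$ for all $t \in [0,T)$. Then $\lim_{t \uparrow T} u(t) = 0$. -/

import Mathlib

open Filter

/-- If `u ≥ 0` is differentiable on `[0,T)` with `u' t ≤ -u t/(T-t) + C`, then
`u t → 0` as `t ↑ T`. -/
theorem stmt_4 (T C : ℝ) (hT : 0 < T) (hC : 0 ≤ C) (u u' : ℝ → ℝ)
    (hu : ∀ t ∈ Set.Ico (0:ℝ) T, HasDerivAt u (u' t) t)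
    (hu0 : ∀ t ∈ Set.Ico (0:ℝ) T, 0 ≤ u t)
    (hineq : ∀ t ∈ Set.Ico (0:ℝ) T, u' t ≤ -(u t / (T - t)) + C) :
    Tendsto u (nhdsWithin T (Set.Iio T)) (nhds 0) := by
  set F : ℝ → ℝ := fun t => u t / (T - t) + C * Real.log (T - t) with hF
  set F' : ℝ → ℝ := fun t =>
    (u' t * (T - t) - u t * (-1)) / (T - t) ^ 2 + C * ((T - t)⁻¹ * (-1)) with hF'
  have hderiv : ∀ t ∈ Set.Ico (0:ℝ) T, HasDerivAt F (F' t) t := by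
    intro t ht
    have hpos : 0 < T - t := sub_pos.2 ht.2
    have hsub : HasDerivAt (fun t : ℝ => T - t) (-1) t := by
      simpa using (hasDerivAt_id t).const_sub T
    have hlog : HasDerivAt (fun t : ℝ => Real.log (T - t)) ((T - t)⁻¹ * (-1)) t :=
      (Real.hasDerivAt_log hpos.ne').comp t hsub
    exact ((hu t ht).div hsub hpos.ne').add (hlog.const_mul C)
  have hderiv_nonpos : ∀ t ∈ Set.Ico (0:ℝ) T, F' t ≤ 0 := by
    intro t ht
    have hpos : 0 < T - t := sub_pos.2 ht.2
    have h1 : u' t * (T - t) + u t ≤ C * (T - t) := by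
      have := hineq t ht
      have h2 : u' t * (T - t) ≤ (-(u t / (T - t)) + C) * (T - t) :=
        mul_le_mul_of_nonneg_right this hpos.le
      calc u' t * (T - t) + u t ≤ (-(u t / (T - t)) + C) * (T - t) + u t := by linarith
        _ = C * (T - t) := by field_simp; ring
    have h3 : (u' t * (T - t) - u t * (-1)) / (T - t) ^ 2 ≤ C * (T - t) / (T - t) ^ 2 := by
      apply div_le_div_of_nonneg_right _ (by positivity)
      linarith
    have h4 : C * (T - t) / (T - t) ^ 2 = C * (T - t)⁻¹ := by
      field_simp
    simp only [hF']
    calc (u' t * (T - t) - u t * (-1)) / (T - t) ^ 2 + C * ((T - t)⁻¹ * (-1))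
        ≤ C * (T - t)⁻¹ + C * ((T - t)⁻¹ * (-1)) := by
          rw [← h4] at *; linarith
      _ = 0 := by ring
  have hanti : AntitoneOn F (Set.Ico 0 T) := by
    apply antitoneOn_of_deriv_nonpos (convex_Ico 0 T)
    · exact fun t ht => (hderiv t ht).continuousAt.continuousWithinAt
    · intro t ht
      rw [interior_Ico] at ht
      exact (hderiv t ⟨ht.1.le, ht.2⟩).differentiableAt.differentiableWithinAt
    · intro t ht
      rw [interior_Ico] at ht
      rw [(hderiv t ⟨ht.1.le, ht.2⟩).deriv]
      exact hderiv_nonpos t ⟨ht.1.le, ht.2⟩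
  have key : ∀ t ∈ Set.Ico (0:ℝ) T, u t ≤ (T - t) * (F 0 - C * Real.log (T - t)) := by
    intro t ht
    have hpos : 0 < T - t := sub_pos.2 ht.2
    have h5 : F t ≤ F 0 := hanti (Set.left_mem_Ico.2 hT) ht ht.1
    have : u t / (T - t) ≤ F 0 - C * Real.log (T - t) := by
      simp only [hF] at h5 ⊢; linarith
    calc u t = (T - t) * (u t / (T - t)) := by field_simp
      _ ≤ (T - t) * (F 0 - C * Real.log (T - t)) :=
        mul_le_mul_of_nonneg_left this hpos.le
  -- squeeze
  have hmem : Set.Ioo (0:ℝ) T ∈ nhdsWithin T (Set.Iio T) :=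
    Ioo_mem_nhdsLT_of_mem (Set.right_mem_Ioc.2 hT)
  have hTt : Tendsto (fun t => T - t) (nhdsWithin T (Set.Iio T)) (nhds 0) := by
    have : Tendsto (fun t : ℝ => T - t) (nhds T) (nhds (T - T)) :=
      (continuous_const.sub continuous_id).tendsto T
    simpa using this.mono_left nhdsWithin_le_nhds
  have hg : Tendsto (fun t => (T - t) * (F 0 - C * Real.log (T - t)))
      (nhdsWithin T (Set.Iio T)) (nhds 0) := by
    have h1 : Tendsto (fun t => (T - t) * F 0) (nhdsWithin T (Set.Iio T)) (nhds 0) := by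
      simpa using hTt.mul_const (F 0)
    have h2 : Tendsto (fun t => (T - t) * Real.log (T - t))
        (nhdsWithin T (Set.Iio T)) (nhds 0) := by
      have := (Real.continuous_mul_log.tendsto 0).comp hTt
      simpa [Function.comp_def] using this
    have := h1.sub ((h2.const_mul C))
    simp only [sub_zero, mul_zero] at this
    convert this using 2 with t
    ring
  have e1 : ∀ᶠ t in nhdsWithin T (Set.Iio T), 0 ≤ u t := by
    filter_upwards [hmem] with t ht
    exact hu0 t ⟨ht.1.le, ht.2⟩
  have e2 : ∀ᶠ t in nhdsWithin T (Set.Iio T),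
      u t ≤ (T - t) * (F 0 - C * Real.log (T - t)) := by
    filter_upwards [hmem] with t ht
    exact key t ⟨ht.1.le, ht.2⟩
  exact squeeze_zero' e1 e2 hg
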